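/- For every nonempty word W over the alphabet {a,b,c}, there is a square-free word of length at most 8 over {a,b,c} that is related to W, where two words are related if one can be obtained from the other by a finite sequence of square reductions and factor duplications (the inverse operations of square reductions). -/

import Mathlib

/-- A single square reduction: a word `U ++ (X ++ X) ++ V` (with `X` nonempty)
is replaced by `U ++ X ++ V`. -/
def Step {α : Type*} (W W' : List α) : Prop :=
  ∃ U X V : List α, X ≠ [] ∧ W = U ++ (X ++ X) ++ V ∧ W' = U ++ X ++ V

/-- `Reaches W W'` : `W'` is obtainable from `W` by a finite sequence of square reductions. -/
def Reaches {α : Type*} (W W' : List α) : Prop := Relation.ReflTransGen Step W W'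

/-- A word is square-free if it contains no square `X ++ X` (with `X` nonempty) as a factor. -/
def SquareFree {α : Type*} (W : List α) : Prop :=
  ∀ X : List α, X ≠ [] → ¬ (X ++ X) <:+: W

/-- The set of square-free reducts of `W`. -/
def Reducts {α : Type*} (W : List α) : Set (List α) := {R | Reaches W R ∧ SquareFree R}

open Relation

section Aux

variable {α : Type*}

lemma step_infix {x y : List α} (p q : List α) (h : Step x y) :
    Step (p ++ x ++ q) (p ++ y ++ q) := by
  obtain ⟨U, X, V, hX, rfl, rfl⟩ := h
  exact ⟨p ++ U, X, V ++ q, hX, by simp, by simp⟩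

lemma eqv_infix {x y : List α} (p q : List α) (h : EqvGen Step x y) :
    EqvGen Step (p ++ x ++ q) (p ++ y ++ q) := by
  induction h with
  | rel a b hab => exact .rel _ _ (step_infix p q hab)
  | refl a => exact .refl _
  | symm a b _ ih => exact .symm _ _ ih
  | trans a b c _ _ ih1 ih2 => exact .trans _ _ _ ih1 ih2

lemma eqv_congr {x y x' y' : List α} (hx : x = x') (hy : y = y')
    (h : EqvGen Step x y) : EqvGen Step x' y' := hx ▸ hy ▸ h

/-- Single letter absorption: `u a u ~ u` when `a` occurs in `u`. -/
lemma SL (r s : List α) (a : α) :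
    EqvGen Step ((r ++ [a] ++ s) ++ [a] ++ (r ++ [a] ++ s)) (r ++ [a] ++ s) := by
  set u := r ++ [a] ++ s with hu
  -- W1 = r a r a s a r a s
  have s1 : Step (r ++ [a] ++ r ++ [a] ++ s ++ [a] ++ r ++ [a] ++ s) (u ++ [a] ++ u) := by
    refine ⟨[], r ++ [a], s ++ [a] ++ (r ++ [a] ++ s), by simp, by simp, by simp [hu]⟩
  have s2 : Step (r ++ [a] ++ r ++ [a] ++ s ++ [a] ++ r ++ [a] ++ s)
      (r ++ [a] ++ r ++ [a] ++ s) := by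
    refine ⟨r, [a] ++ r ++ [a] ++ s, [], by simp, by simp, by simp⟩
  have s3 : Step (r ++ [a] ++ r ++ [a] ++ s) u := by
    refine ⟨[], r ++ [a], s, by simp, by simp, by simp [hu]⟩
  exact .trans _ _ _ (.symm _ _ (.rel _ _ s1)) (.trans _ _ _ (.rel _ _ s2) (.rel _ _ s3))

/-- Absorption: `u v u ~ u` when every letter of `v` occurs in `u`. -/
lemma F1 (u : List α) : ∀ v : List α, (∀ x ∈ v, x ∈ u) →
    EqvGen Step (u ++ v ++ u) u := by
  intro v
  induction v with
  | nil =>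
    intro _
    rcases eq_or_ne u [] with rfl | hne
    · simpa using EqvGen.refl ([] : List α)
    · exact eqv_congr (x := [] ++ (u ++ u) ++ []) (y := [] ++ u ++ [])
        (by simp) (by simp) (.rel _ _ ⟨[], u, [], hne, rfl, rfl⟩)
  | cons a v' ih =>
    intro h
    have ha : a ∈ u := h a (by simp)
    have ihu : EqvGen Step (u ++ v' ++ u) u := ih fun x hx => h x (by simp [hx])
    obtain ⟨r, s, hrs⟩ := List.append_of_mem ha
    have hu2 : u = r ++ [a] ++ s := by simpa using hrs
    have sl : EqvGen Step (u ++ [a] ++ u) u := by rw [hu2]; exact SL r s a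
    -- step 1 : u (a v') u ~ (u v' u) (a v') u
    have e1 : EqvGen Step (u ++ (a :: v') ++ u) ((u ++ v' ++ u) ++ ((a :: v') ++ u)) := by
      refine .symm _ _ (eqv_congr ?_ ?_ (eqv_infix [] ((a :: v') ++ u) ihu)) <;> simp
    -- step 2 : replace the final u by u a u
    have e2 : EqvGen Step ((u ++ v' ++ u) ++ ((a :: v') ++ u))
        (u ++ (v' ++ u ++ [a]) ++ (v' ++ u ++ [a]) ++ u) := by
      refine .symm _ _ (eqv_congr ?_ ?_ (eqv_infix ((u ++ v' ++ u) ++ (a :: v')) [] sl)) <;>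
        simp
    -- step 3 : square reduction
    have e3 : EqvGen Step (u ++ (v' ++ u ++ [a]) ++ (v' ++ u ++ [a]) ++ u)
        (u ++ (v' ++ u ++ [a]) ++ u) :=
      .rel _ _ ⟨u, v' ++ u ++ [a], u, by simp, by simp, by simp⟩
    -- step 4 : u v' u ~ u inside
    have e4 : EqvGen Step (u ++ (v' ++ u ++ [a]) ++ u) (u ++ [a] ++ u) := by
      refine eqv_congr ?_ ?_ (eqv_infix [] ([a] ++ u) ihu) <;> simp
    exact .trans _ _ _ e1 (.trans _ _ _ e2 (.trans _ _ _ e3 (.trans _ _ _ e4 sl)))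

/-- Key lemma: if `u` and `t` each contain every letter, then `u m t ~ u t`. -/
lemma key (u m t : List α) (h1 : ∀ x ∈ t, x ∈ u) (h2 : ∀ x ∈ u, x ∈ t)
    (h3 : ∀ x ∈ m, x ∈ t) :
    EqvGen Step (u ++ m ++ t) (u ++ t) := by
  have f1 : EqvGen Step (u ++ t ++ u) u := F1 u t h1
  have f2 : EqvGen Step (t ++ (u ++ m) ++ t) t := F1 t (u ++ m) (by
    intro x hx
    rcases List.mem_append.1 hx with hx | hx
    · exact h2 x hx
    · exact h3 x hx)
  have e1 : EqvGen Step (u ++ m ++ t) ((u ++ t ++ u) ++ (m ++ t)) := by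
    refine .symm _ _ (eqv_congr ?_ ?_ (eqv_infix [] (m ++ t) f1)) <;> simp
  have e2 : EqvGen Step ((u ++ t ++ u) ++ (m ++ t)) (u ++ t) := by
    refine eqv_congr ?_ ?_ (eqv_infix u [] f2) <;> simp
  exact .trans _ _ _ e1 e2

lemma sqfree_infix {w l : List α} (h : SquareFree w) (hl : l <:+: w) : SquareFree l :=
  fun X hX hXX => h X hX (hXX.trans hl)

lemma eqv_of_reaches {w r : List α} (h : Reaches w r) : EqvGen Step w r := by
  induction h with
  | refl => exact .refl _
  | tail _ hbc ih => exact .trans _ _ _ ih (.rel _ _ hbc)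

end Aux

lemma reduce_all_aux : ∀ (n : ℕ) (w : List (Fin 3)), w.length ≤ n →
    ∃ R : List (Fin 3), Reaches w R ∧ SquareFree R ∧ R.length ≤ w.length := by
  intro n
  induction n with
  | zero =>
    intro w hw
    have : w = [] := List.length_eq_zero_iff.1 (Nat.le_zero.1 hw)
    subst this
    refine ⟨[], Relation.ReflTransGen.refl, ?_, le_rfl⟩
    intro X hX hXX
    have := List.eq_nil_of_infix_nil hXX
    simp [hX] at this
  | succ n ih =>
    intro w hw
    by_cases h : SquareFree w
    · exact ⟨w, Relation.ReflTransGen.refl, h, le_rfl⟩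
    · unfold SquareFree at h
      push_neg at h
      obtain ⟨X, hX, hinf⟩ := h
      obtain ⟨U, V, huv⟩ := hinf
      have hstep : Step w (U ++ X ++ V) := ⟨U, X, V, hX, huv.symm, rfl⟩
      have hXlen : 1 ≤ X.length := List.length_pos_iff.2 hX
      have hwlen : w.length = U.length + (X.length + X.length) + V.length := by
        rw [← huv]; simp only [List.length_append]; try omega
      have hlt : (U ++ X ++ V).length ≤ n := by
        simp only [List.length_append]
        omega
      obtain ⟨R, hre, hsf, hlen⟩ := ih (U ++ X ++ V) hlt
      refine ⟨R, Relation.ReflTransGen.head hstep hre, hsf, ?_⟩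
      simp only [List.length_append] at hlen ⊢
      omega

/-- Every word reduces to a square-free word of no greater length. -/
lemma reduce_all (w : List (Fin 3)) :
    ∃ R : List (Fin 3), Reaches w R ∧ SquareFree R ∧ R.length ≤ w.length :=
  reduce_all_aux w.length w le_rfl

/-- Square-free ternary words missing a letter have length at most 3. -/
lemma short_of_misses (w : List (Fin 3)) (hsf : SquareFree w) (c : Fin 3) (hc : c ∉ w) :
    w.length ≤ 3 := by
  by_contra hlen
  push_neg at hlen
  obtain ⟨a, b, d, e, rest, rfl⟩ : ∃ a b d e rest, w = a :: b :: d :: e :: rest := by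
    match w, hlen with
    | a :: b :: d :: e :: rest, _ => exact ⟨a, b, d, e, rest, rfl⟩
  have h1 : a ≠ b := fun heq => hsf [a] (by simp) ⟨[], d :: e :: rest, by simp [heq]⟩
  have h2 : b ≠ d := fun heq => hsf [b] (by simp) ⟨[a], e :: rest, by simp [heq]⟩
  have h3 : d ≠ e := fun heq => hsf [d] (by simp) ⟨[a, b], rest, by simp [heq]⟩
  have h4 : ¬(a = d ∧ b = e) := fun ⟨hh, hh'⟩ =>
    hsf [a, b] (by simp) ⟨[], rest, by simp [hh, hh']⟩
  simp only [List.mem_cons, not_or] at hc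
  obtain ⟨hca, hcb, hcd, hce, -⟩ := hc
  clear hsf hlen
  revert h1 h2 h3 h4 hca hcb hcd hce
  revert c a b d e
  decide

lemma exists_full_prefix (w : List (Fin 3)) (hfull : ∀ x : Fin 3, x ∈ w)
    (hsf : SquareFree w) :
    ∃ p q : List (Fin 3), w = p ++ q ∧ (∀ x : Fin 3, x ∈ p) ∧ p.length ≤ 4 := by
  have hP : ∃ k, ∀ x : Fin 3, x ∈ w.take k := ⟨w.length, by simpa using hfull⟩
  classical
  let k := Nat.find hP
  have hk : ∀ x : Fin 3, x ∈ w.take k := Nat.find_spec hP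
  have hk0 : k ≠ 0 := by
    intro h0
    have := hk 0
    rw [h0] at this
    simp at this
  have hmin : ¬ ∀ x : Fin 3, x ∈ w.take (k - 1) := Nat.find_min hP (by omega)
  push_neg at hmin
  obtain ⟨c, hc⟩ := hmin
  have hshort : (w.take (k - 1)).length ≤ 3 :=
    short_of_misses _ (sqfree_infix hsf (w.take_prefix _).isInfix) c hc
  refine ⟨w.take k, w.drop k, (w.take_append_drop k).symm, hk, ?_⟩
  have : (w.take (k - 1)).length = min (k - 1) w.length := List.length_take
  have h2 : (w.take k).length = min k w.length := List.length_take
  rcases le_or_gt k w.length with h | h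
  · omega
  · omega

set_option linter.unusedVariables false in
/-- Every nonempty ternary word is related (by a finite sequence of square reductions
and factor duplications, i.e. in the equivalence relation generated by single square
reductions) to a square-free word of length at most `8`. -/
theorem related_to_short_squarefree (W : List (Fin 3)) (hW : W ≠ []) :
    ∃ R : List (Fin 3), SquareFree R ∧ R.length ≤ 8 ∧ Relation.EqvGen Step W R := by
  obtain ⟨R, hre, hsf, hlen⟩ := reduce_all W
  rcases le_or_gt R.length 8 with h8 | h8
  · exact ⟨R, hsf, h8, eqv_of_reaches hre⟩
  have hfull : ∀ x : Fin 3, x ∈ R := by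
    by_contra hco
    push_neg at hco
    obtain ⟨c, hc⟩ := hco
    have := short_of_misses R hsf c hc
    omega
  -- front decomposition
  obtain ⟨p, q, hpq, hpfull, hplen⟩ := exists_full_prefix R hfull hsf
  -- back decomposition via reverse
  have hsfr : SquareFree R.reverse := by
    intro X hX hXX
    have : (X.reverse ++ X.reverse) <:+: R := by
      rw [← List.reverse_reverse R, ← List.reverse_append]
      exact List.reverse_infix.2 hXX
    exact hsf X.reverse (by simpa using hX) this
  obtain ⟨p', q', hpq', hpfull', hplen'⟩ := exists_full_prefix R.reverse
    (fun x => List.mem_reverse.2 (hfull x)) hsfr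
  have hRdec : R = q'.reverse ++ p'.reverse := by
    rw [← List.reverse_append, ← hpq', List.reverse_reverse]
  have hRne : R ≠ [] := by
    intro h
    rw [h] at h8
    simp at h8
  -- R ~ R ++ R
  have e0 : EqvGen Step R (R ++ R) :=
    .symm _ _ (.rel _ _ ⟨[], R, [], hRne, by simp, by simp⟩)
  -- R ++ R = p ++ (q ++ q'.reverse) ++ p'.reverse
  have e1 : EqvGen Step (R ++ R) (p ++ p'.reverse) := by
    have hk := key p (q ++ q'.reverse) p'.reverse
      (fun x _ => hpfull x) (fun x _ => by simpa using hpfull' x)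
      (fun x _ => by simpa using hpfull' x)
    have hEq : R ++ R = p ++ (q ++ q'.reverse) ++ p'.reverse := by
      nth_rewrite 1 [hpq]
      nth_rewrite 1 [hRdec]
      simp
    exact eqv_congr hEq.symm rfl hk
  obtain ⟨R', hre', hsf', hlen'⟩ := reduce_all (p ++ p'.reverse)
  refine ⟨R', hsf', ?_, ?_⟩
  · have : (p ++ p'.reverse).length ≤ 8 := by
      simp only [List.length_append, List.length_reverse]
      omega
    omega
  · exact .trans _ _ _ (eqv_of_reaches hre)
      (.trans _ _ _ (.trans _ _ _ e0 e1) (eqv_of_reaches hre'))
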